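/- Let a, r ∈ ℝ and ΔQ > 0 with |r| > a²·ΔQ, and let p0 ∈ {ΔQ, −ΔQ}. Consider the quadratic equation (r/p0 − a²)·t² + 8a·t − 16 = 0 in the real unknown t. Then: (i) its discriminant equals 64·r/p0; (ii) it has a real solution if and only if p0 = sign(r)·ΔQ; and (iii) when p0 = sign(r)·ΔQ, it has exactly one positive solution, namely t = 4/(a + √α) with α := |r|/ΔQ. -/

import Mathlib

lemma cheqss2_neg_case (a q t : ℝ) (hq : q < 0) :
    (q - a ^ 2) * t ^ 2 + 8 * a * t - 16 ≠ 0 := by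
  intro h
  have h1 : q * t ^ 2 = (a * t - 4) ^ 2 := by linear_combination h
  have h2 : q * t ^ 2 ≤ 0 := mul_nonpos_of_nonpos_of_nonneg hq.le (sq_nonneg t)
  have h3 : (a * t - 4) ^ 2 = 0 := le_antisymm (h1 ▸ h2) (sq_nonneg _)
  have h4 : q * t ^ 2 = 0 := by rw [h1, h3]
  have h5 : t ^ 2 = 0 := by
    rcases mul_eq_zero.mp h4 with h | h
    · exact absurd h hq.ne
    · exact h
  have ht : t = 0 := by
    have := pow_eq_zero_iff (n := 2) (by norm_num) |>.mp h5
    exact this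
  rw [ht] at h3
  norm_num at h3

lemma cheqss2_pos_case (a s t : ℝ) (hsa : |a| < s) :
    (0 < t ∧ (s ^ 2 - a ^ 2) * t ^ 2 + 8 * a * t - 16 = 0) ↔ t = 4 / (a + s) := by
  have h1 : 0 < a + s := by linarith [neg_abs_le a]
  have h2 : 0 < s - a := by linarith [le_abs_self a]
  constructor
  · rintro ⟨ht, heq⟩
    have hfac : ((s - a) * t + 4) * ((s + a) * t - 4) = 0 := by linear_combination heq
    rcases mul_eq_zero.mp hfac with h | h
    · nlinarith [mul_pos h2 ht]
    · field_simp
      linear_combination h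
  · rintro rfl
    refine ⟨by positivity, ?_⟩
    field_simp
    ring

/-- Step-time equation of the second-order Chebyshev LIQSS (CheQSS2) method: for
`|r| > a²·ΔQ` and `p0 = ±ΔQ`, the quadratic `(r/p0 − a²)·t² + 8a·t − 16 = 0` has
discriminant `64·r/p0`, it has a real solution iff `p0 = sign(r)·ΔQ`, and in that case
its unique positive solution is `4/(a + √α)` with `α = |r|/ΔQ`. -/
theorem cheqss2_step_time (a r ΔQ : ℝ) (hΔQ : 0 < ΔQ) (hr : |r| > a ^ 2 * ΔQ)
    (p0 : ℝ) (hp0 : p0 = ΔQ ∨ p0 = -ΔQ) :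
    discrim (r / p0 - a ^ 2) (8 * a) (-16) = 64 * (r / p0) ∧
    ((∃ t : ℝ, (r / p0 - a ^ 2) * t ^ 2 + 8 * a * t - 16 = 0) ↔ p0 = Real.sign r * ΔQ) ∧
      (p0 = Real.sign r * ΔQ →
        ∀ t : ℝ, (0 < t ∧ (r / p0 - a ^ 2) * t ^ 2 + 8 * a * t - 16 = 0) ↔
          t = 4 / (a + Real.sqrt (|r| / ΔQ))) := by
  have hrpos : (0:ℝ) < |r| := lt_of_le_of_lt (by positivity) hr
  have hr0 : r ≠ 0 := abs_pos.mp hrpos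
  have hΔ : ΔQ ≠ 0 := hΔQ.ne'
  have hα : a ^ 2 < |r| / ΔQ := (lt_div_iff₀ hΔQ).mpr (by linarith)
  have hαpos : 0 < |r| / ΔQ := by positivity
  set s := Real.sqrt (|r| / ΔQ) with hsdef
  have hs2 : s ^ 2 = |r| / ΔQ := Real.sq_sqrt hαpos.le
  have hsa : |a| < s := by
    by_contra hle
    push_neg at hle
    have h2 := pow_le_pow_left₀ (Real.sqrt_nonneg (|r| / ΔQ)) hle 2
    rw [sq_abs] at h2
    linarith
  have hgood : p0 = Real.sign r * ΔQ → r / p0 = |r| / ΔQ := by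
    intro h
    rcases hr0.lt_or_gt with hneg | hpos
    · rw [h, Real.sign_of_neg hneg, abs_of_neg hneg]
      field_simp
    · rw [h, Real.sign_of_pos hpos, abs_of_pos hpos]
      field_simp
  have hbad : p0 ≠ Real.sign r * ΔQ → r / p0 = -(|r| / ΔQ) := by
    intro h
    rcases hr0.lt_or_gt with hneg | hpos
    · have hp : p0 = ΔQ := by
        rcases hp0 with h1 | h1
        · exact h1
        · exact absurd (by rw [h1, Real.sign_of_neg hneg]; ring) h
      rw [hp, abs_of_neg hneg]
      field_simp
    · have hp : p0 = -ΔQ := by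
        rcases hp0 with h1 | h1
        · exact absurd (by rw [h1, Real.sign_of_pos hpos]; ring) h
        · exact h1
      rw [hp, abs_of_pos hpos]
      field_simp
  refine ⟨by unfold discrim; ring, ?_, ?_⟩
  · constructor
    · rintro ⟨t, ht⟩
      by_contra hne
      rw [hbad hne] at ht
      exact cheqss2_neg_case a (-(|r| / ΔQ)) t (by linarith) ht
    · intro h
      refine ⟨4 / (a + s), ?_⟩
      rw [hgood h, ← hs2]
      exact ((cheqss2_pos_case a s _ hsa).mpr rfl).2
  · intro h t
    rw [hgood h, ← hs2]
    exact cheqss2_pos_case a s t hsa
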